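/- Let N be a finite simple and cosimple matroid with an exact k-separation (A, B). Let M be a finite simple and cosimple matroid with distinct elements e, f ∈ E(M) \ E(N) such that M \ e / f = N. If λ_{M/f}(A) = k − 1 and λ_{M\e}(A) = k − 1, then λ_M(A) = k − 1. -/

import Mathlib

open Set

namespace SeymourDecomp

variable {α : Type*}

/-- The rank of a set `X` in a (finite) matroid `M`: the largest cardinality of an
independent subset of `X`. -/
noncomputable def rk (M : Matroid α) (X : Set α) : ℕ :=
  sSup {n | ∃ I, M.Indep I ∧ I ⊆ X ∧ I.ncard = n}

/-- The connectivity function `λ_M(X) = r(X) + r(E − X) − r(M)` (integer-valued). -/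
noncomputable def lam (M : Matroid α) (X : Set α) : ℤ :=
  (rk M X : ℤ) + (rk M (M.E \ X) : ℤ) - (rk M M.E : ℤ)

/-- A circuit: a minimal dependent set. -/
def IsCircuit (M : Matroid α) (C : Set α) : Prop :=
  M.Dep C ∧ ∀ D, D ⊂ C → M.Indep D

/-- A cocircuit: a circuit of the dual matroid. -/
def IsCocircuit (M : Matroid α) (C : Set α) : Prop :=
  IsCircuit M✶ C

/-- A loop: a one-element circuit. -/
def IsLoop (M : Matroid α) (e : α) : Prop := IsCircuit M {e}

/-- A coloop: a one-element cocircuit. -/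
def IsColoop (M : Matroid α) (e : α) : Prop := IsCocircuit M {e}

/-- A matroid is simple if it has no loops and no 2-element circuits,
i.e. every circuit has at least 3 elements. -/
def Simple (M : Matroid α) : Prop := ∀ C, IsCircuit M C → 3 ≤ C.ncard

/-- A matroid is cosimple if its dual is simple. -/
def Cosimple (M : Matroid α) : Prop := Simple M✶

/-- Deletion of a set of elements. -/
def delete (M : Matroid α) (D : Set α) : Matroid α := M.restrict (M.E \ D)

/-- Contraction of a set of elements: `M / C = (M✶ \ C)✶`. -/
def contract (M : Matroid α) (C : Set α) : Matroid α := (delete M✶ C)✶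

/-- `N` is a minor of `M` if it is obtained from `M` by contracting a set and
deleting a disjoint set. -/
def IsMinor (N M : Matroid α) : Prop :=
  ∃ C D : Set α, C ⊆ M.E ∧ D ⊆ M.E ∧ Disjoint C D ∧ N = delete (contract M C) D

/-- `(A, B)` is a `k`-separation of `M`. -/
def KSep (M : Matroid α) (k : ℕ) (A B : Set α) : Prop :=
  A ∪ B = M.E ∧ Disjoint A B ∧ k ≤ A.ncard ∧ k ≤ B.ncard ∧ lam M A ≤ (k : ℤ) - 1

/-- `(A, B)` is an exact `k`-separation of `M`. -/
def ExactKSep (M : Matroid α) (k : ℕ) (A B : Set α) : Prop :=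
  A ∪ B = M.E ∧ Disjoint A B ∧ k ≤ A.ncard ∧ k ≤ B.ncard ∧ lam M A = (k : ℤ) - 1

/-- For `n ≥ 2`, `M` is `n`-connected if it has no `k`-separation for `k ≤ n − 1`. -/
def NConnected (M : Matroid α) (n : ℕ) : Prop :=
  ∀ k, 1 ≤ k → k ≤ n - 1 → ∀ A B : Set α, ¬ KSep M k A B

/-- A triangle: a 3-element circuit. -/
def Triangle (M : Matroid α) (T : Set α) : Prop := IsCircuit M T ∧ T.ncard = 3

/-- A triad: a 3-element cocircuit. -/
def Triad (M : Matroid α) (T : Set α) : Prop := IsCocircuit M T ∧ T.ncard = 3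

/-- Two matroids on the same ground type are isomorphic if there is a bijection
between their ground sets preserving independence. -/
def Iso (M N : Matroid α) : Prop :=
  ∃ φ : α → α, Set.BijOn φ M.E N.E ∧ ∀ I, I ⊆ M.E → (M.Indep I ↔ N.Indep (φ '' I))

/-- A class of matroids closed under minors. -/
def MinorClosed (𝓜 : Set (Matroid α)) : Prop :=
  ∀ M ∈ 𝓜, ∀ N : Matroid α, IsMinor N M → N ∈ 𝓜

/-- A class of matroids closed under isomorphism. -/
def IsoClosed (𝓜 : Set (Matroid α)) : Prop :=
  ∀ M ∈ 𝓜, ∀ N : Matroid α, Iso M N → N ∈ 𝓜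


lemma rk_bddAbove (M : Matroid α) [M.Finite] (X : Set α) :
    BddAbove {n | ∃ I, M.Indep I ∧ I ⊆ X ∧ I.ncard = n} := by
  refine ⟨M.E.ncard, ?_⟩
  rintro n ⟨J, hJ, hJX, rfl⟩
  exact ncard_le_ncard hJ.subset_ground M.ground_finite

lemma ncard_le_rk {M : Matroid α} [M.Finite] {J X : Set α} (hJ : M.Indep J) (hJX : J ⊆ X) :
    J.ncard ≤ rk M X :=
  le_csSup (rk_bddAbove M X) ⟨J, hJ, hJX, rfl⟩

lemma rk_eq_ncard {M : Matroid α} [M.Finite] {I X : Set α} (hI : M.Indep I) (hIX : I ⊆ X)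
    (hub : ∀ J, M.Indep J → J ⊆ X → J.ncard ≤ I.ncard) : rk M X = I.ncard := by
  refine le_antisymm (csSup_le ⟨0, ∅, M.empty_indep, empty_subset _, by simp⟩ ?_)
    (ncard_le_rk hI hIX)
  rintro n ⟨J, hJ, hJX, rfl⟩
  exact hub J hJ hJX

lemma rk_eq_of_basis' {M : Matroid α} [M.Finite] {I X : Set α} (hI : M.IsBasis' I X) :
    rk M X = I.ncard := by
  refine rk_eq_ncard hI.indep hI.subset (fun J hJ hJX => ?_)
  obtain ⟨I', hI', hJI'⟩ := hJ.subset_isBasis'_of_subset hJX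
  have h1 : J.ncard ≤ I'.ncard :=
    ncard_le_ncard hJI' (M.set_finite I' hI'.indep.subset_ground)
  have h2 : I'.ncard = I.ncard :=
    (Matroid.isBase_restrict_iff'.2 hI').ncard_eq_ncard_of_isBase (Matroid.isBase_restrict_iff'.2 hI)
  omega

lemma rk_mono {M : Matroid α} [M.Finite] {X Y : Set α} (hXY : X ⊆ Y) : rk M X ≤ rk M Y := by
  obtain ⟨I, hI⟩ := M.exists_isBasis' X
  rw [rk_eq_of_basis' hI]
  exact ncard_le_rk hI.indep (hI.subset.trans hXY)

lemma rk_ground_base {M : Matroid α} [M.Finite] {B : Set α} (hB : M.IsBase B) :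
    rk M M.E = B.ncard :=
  rk_eq_of_basis' hB.isBasis_ground.isBasis'

lemma rk_restrict (M : Matroid α) (R X : Set α) : rk (M.restrict R) X = rk M (X ∩ R) := by
  unfold rk
  congr 1
  ext n
  constructor
  · rintro ⟨I, hI, hIX, rfl⟩
    rw [Matroid.restrict_indep_iff] at hI
    exact ⟨I, hI.1, subset_inter hIX hI.2, rfl⟩
  · rintro ⟨I, hI, hIX, rfl⟩
    exact ⟨I, Matroid.restrict_indep_iff.2 ⟨hI, hIX.trans inter_subset_right⟩,
      hIX.trans inter_subset_left, rfl⟩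

lemma rk_dual_add (M : Matroid α) [M.Finite] {X : Set α} (hX : X ⊆ M.E) :
    rk M✶ X + rk M M.E = X.ncard + rk M (M.E \ X) := by
  have hEfin := M.ground_finite
  have hXfin : X.Finite := hEfin.subset hX
  obtain ⟨I, hI⟩ := M.exists_isBasis (M.E \ X) diff_subset
  obtain ⟨Bs, hBs, hIBs⟩ := hI.indep.exists_isBase_superset
  have hBsE := hBs.subset_ground
  have hBsfin : Bs.Finite := hEfin.subset hBsE
  have hIB : Bs ∩ (M.E \ X) = I :=
    (hI.eq_of_subset_indep (hBs.indep.inter_right _)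
      (subset_inter hIBs hI.subset) inter_subset_right).symm
  -- cardinality split of Bs
  have hBsdiff : Bs \ X = I := by
    rw [← hIB]; ext x; simp only [mem_inter_iff, mem_diff]
    exact ⟨fun h => ⟨h.1, hBsE h.1, h.2⟩, fun h => ⟨h.1, h.2.2⟩⟩
  have hBsplit : (Bs ∩ X).ncard + I.ncard = Bs.ncard := by
    rw [← hBsdiff]; exact ncard_inter_add_ncard_diff_eq_ncard Bs X hBsfin
  have hXsplit : (Bs ∩ X).ncard + (X \ Bs).ncard = X.ncard := by
    rw [inter_comm]; exact ncard_inter_add_ncard_diff_eq_ncard X Bs hXfin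
  have hrkdiff : rk M (M.E \ X) = I.ncard := rk_eq_of_basis' hI.isBasis'
  have hrkdual : rk M✶ X = (X \ Bs).ncard := by
    refine rk_eq_ncard ?_ diff_subset ?_
    · exact Matroid.dual_indep_iff_exists'.2
        ⟨diff_subset.trans hX, Bs, hBs, disjoint_sdiff_left⟩
    · intro J hJ hJX
      obtain ⟨hJE, B₂, hB₂, hJB₂⟩ := Matroid.dual_indep_iff_exists'.1 hJ
      have hB₂E := hB₂.subset_ground
      have hB₂fin : B₂.Finite := hEfin.subset hB₂E
      have a1 : (B₂ ∩ X).ncard + (B₂ ∩ (M.E \ X)).ncard = B₂.ncard := by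
        have h1 : B₂ ∩ (M.E \ X) = B₂ \ X := by
          ext x; simp only [mem_inter_iff, mem_diff]
          exact ⟨fun h => ⟨h.1, h.2.2⟩, fun h => ⟨h.1, hB₂E h.1, h.2⟩⟩
        rw [h1]; exact ncard_inter_add_ncard_diff_eq_ncard B₂ X hB₂fin
      have a3 : B₂.ncard = Bs.ncard := hB₂.ncard_eq_ncard_of_isBase hBs
      have a4 : (B₂ ∩ (M.E \ X)).ncard ≤ I.ncard := by
        rw [← hrkdiff]
        exact ncard_le_rk (hB₂.indep.inter_right _) inter_subset_right
      have a5 : J.ncard + (B₂ ∩ X).ncard ≤ X.ncard := by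
        rw [← ncard_union_eq (disjoint_of_subset_right inter_subset_left hJB₂)
          (hEfin.subset hJE) (hB₂fin.subset inter_subset_left)]
        exact ncard_le_ncard (union_subset hJX inter_subset_right) hXfin
      omega
  rw [hrkdual, hrkdiff, rk_ground_base hBs]
  omega

lemma delete_ground (M : Matroid α) (D : Set α) : (delete M D).E = M.E \ D := rfl

lemma contract_ground (M : Matroid α) (C : Set α) : (contract M C).E = M.E \ C := rfl

lemma delete_finite (M : Matroid α) [M.Finite] (D : Set α) : (delete M D).Finite :=
  Matroid.restrict_finite (M.ground_finite.subset diff_subset)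

instance contract_finite (M : Matroid α) [M.Finite] (C : Set α) : (contract M C).Finite := by
  haveI : (delete M✶ C).Finite := delete_finite M✶ C
  exact Matroid.dual_finite

lemma rk_delete (M : Matroid α) (D X : Set α) (hX : X ⊆ M.E \ D) :
    rk (delete M D) X = rk M X := by
  rw [delete, rk_restrict, inter_eq_self_of_subset_left hX]

lemma rk_contract_add (M : Matroid α) [M.Finite] {C X : Set α} (hC : C ⊆ M.E)
    (hX : X ⊆ M.E \ C) : rk (contract M C) X + rk M C = rk M (X ∪ C) := by
  have hEfin := M.ground_finite
  haveI : (delete M✶ C).Finite := delete_finite M✶ C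
  have hXE : X ⊆ (delete M✶ C).E := hX
  have e1 := rk_dual_add (delete M✶ C) hXE
  have hg : (delete M✶ C).E = M.E \ C := rfl
  rw [hg] at e1
  have e2 : rk (delete M✶ C) (M.E \ C) = rk M✶ (M.E \ C) :=
    rk_delete M✶ C _ subset_rfl
  have e3 : rk (delete M✶ C) ((M.E \ C) \ X) = rk M✶ ((M.E \ C) \ X) :=
    rk_delete M✶ C _ diff_subset
  rw [e2, e3] at e1
  have e4 := rk_dual_add M (diff_subset (s := M.E) (t := C))
  rw [diff_diff_cancel_left hC] at e4
  have hsub : (M.E \ C) \ X ⊆ M.E := diff_subset.trans diff_subset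
  have e5 := rk_dual_add M hsub
  have hcompl : M.E \ ((M.E \ C) \ X) = X ∪ C := by
    ext x
    have h1 : x ∈ X → x ∈ M.E := fun h => (hX h).1
    have h3 : x ∈ C → x ∈ M.E := fun h => hC h
    simp only [mem_diff, mem_union]
    tauto
  rw [hcompl] at e5
  have e6 : X.ncard + ((M.E \ C) \ X).ncard = (M.E \ C).ncard := by
    have := ncard_diff_add_ncard_of_subset hX (hEfin.subset diff_subset)
    omega
  have e7 : rk M (X ∪ C) = rk M (C ∪ X) := by rw [union_comm]
  have e8 : rk (contract M C) X = rk (delete M✶ C)✶ X := rfl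
  omega

lemma indep_singleton_of_simple {M : Matroid α} (h : Simple M) {x : α} (hx : x ∈ M.E) :
    M.Indep {x} := by
  by_contra hdep
  have hc : IsCircuit M {x} := by
    refine ⟨⟨hdep, by simpa using hx⟩, fun D hD => ?_⟩
    rw [ssubset_singleton_iff.1 hD]
    exact M.empty_indep
  have := h _ hc
  simp [ncard_singleton] at this

lemma rk_singleton {M : Matroid α} [M.Finite] {x : α} (hx : M.Indep {x}) :
    rk M {x} = 1 := by
  rw [rk_eq_of_basis' hx.isBasis_self.isBasis', ncard_singleton]

lemma rk_ground_diff_singleton {M : Matroid α} [M.Finite] {x : α}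
    (hx : M✶.Indep {x}) : rk M (M.E \ {x}) = rk M M.E := by
  obtain ⟨hxE, B, hB, hdisj⟩ := Matroid.dual_indep_iff_exists'.1 hx
  refine le_antisymm (rk_mono diff_subset) ?_
  rw [rk_ground_base hB]
  refine ncard_le_rk hB.indep (subset_diff.2 ⟨hB.subset_ground, hdisj.symm⟩)


/-- **Lemma 4.3(i)**. If `M \ e / f = N`, `λ_{M/f}(A) = k − 1` and `λ_{M\e}(A) = k − 1`,
then `λ_M(A) = k − 1`. -/
theorem lam_eq_of_contract_delete
    (N : Matroid α) (hNfin : N.Finite) (hNsimple : Simple N) (hNcosimple : Cosimple N)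
    (k : ℕ) (hk : 1 ≤ k) (A B : Set α) (hsep : ExactKSep N k A B)
    (M : Matroid α) (hMfin : M.Finite) (hMsimple : Simple M) (hMcosimple : Cosimple M)
    (e f : α) (hef : e ≠ f) (he : e ∈ M.E \ N.E) (hf : f ∈ M.E \ N.E)
    (hN : contract (delete M {e}) {f} = N)
    (h1 : lam (contract M {f}) A = (k : ℤ) - 1)
    (h2 : lam (delete M {e}) A = (k : ℤ) - 1) :
    lam M A = (k : ℤ) - 1 := by
  haveI : M.Finite := hMfin
  haveI hM'fin : (delete M {e}).Finite := delete_finite M {e}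
  have hEfin := M.ground_finite
  obtain ⟨heE, -⟩ := he
  obtain ⟨hfE, -⟩ := hf
  have hNE : N.E = (M.E \ {e}) \ {f} := by rw [← hN]; rfl
  obtain ⟨hU, hdisj, -, -, hlamN⟩ := hsep
  -- membership facts
  have hA : ∀ x ∈ A, x ∈ M.E ∧ x ≠ e ∧ x ≠ f := by
    intro x hx
    have : x ∈ N.E := hU ▸ Or.inl hx
    rw [hNE] at this
    exact ⟨this.1.1, by simpa using this.1.2, by simpa using this.2⟩
  have hB : ∀ x ∈ B, x ∈ M.E ∧ x ≠ e ∧ x ≠ f := by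
    intro x hx
    have : x ∈ N.E := hU ▸ Or.inr hx
    rw [hNE] at this
    exact ⟨this.1.1, by simpa using this.1.2, by simpa using this.2⟩
  have hmem : ∀ x, x ∈ M.E → x ≠ e → x ≠ f → (x ∈ A ∨ x ∈ B) := by
    intro x hx h1' h2'
    have : x ∈ N.E := by rw [hNE]; exact ⟨⟨hx, by simpa⟩, by simpa⟩
    rw [← hU] at this
    exact this
  have hdisj' : ∀ x ∈ A, x ∉ B := fun x hx hxB => Set.disjoint_left.1 hdisj hx hxB
  -- set identities
  have S1 : (M.E \ {e}) \ A = B ∪ {f} := by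
    ext x
    simp only [mem_diff, mem_union, mem_singleton_iff]
    constructor
    · rintro ⟨⟨hxE, hxe⟩, hxA⟩
      by_cases hxf : x = f
      · exact Or.inr hxf
      · rcases hmem x hxE hxe hxf with h | h
        · exact absurd h hxA
        · exact Or.inl h
    · rintro (hx | rfl)
      · exact ⟨⟨(hB x hx).1, (hB x hx).2.1⟩, fun hxA => hdisj' x hxA hx⟩
      · exact ⟨⟨hfE, Ne.symm (by simpa using hef)⟩, fun hxA => (hA x hxA).2.2 rfl⟩
  have S2 : (M.E \ {f}) \ A = B ∪ {e} := by
    ext x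
    simp only [mem_diff, mem_union, mem_singleton_iff]
    constructor
    · rintro ⟨⟨hxE, hxf⟩, hxA⟩
      by_cases hxe : x = e
      · exact Or.inr hxe
      · rcases hmem x hxE hxe hxf with h | h
        · exact absurd h hxA
        · exact Or.inl h
    · rintro (hx | rfl)
      · exact ⟨⟨(hB x hx).1, (hB x hx).2.2⟩, fun hxA => hdisj' x hxA hx⟩
      · exact ⟨⟨heE, hef⟩, fun hxA => (hA x hxA).2.1 rfl⟩
  have S5 : N.E \ A = B := by
    rw [hNE]
    ext x
    simp only [mem_diff, mem_singleton_iff]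
    constructor
    · rintro ⟨⟨⟨hxE, hxe⟩, hxf⟩, hxA⟩
      rcases hmem x hxE hxe hxf with h | h
      · exact absurd h hxA
      · exact h
    · intro hx
      exact ⟨⟨⟨(hB x hx).1, (hB x hx).2.1⟩, (hB x hx).2.2⟩, fun hxA => hdisj' x hxA hx⟩
  have S7 : M.E \ A = B ∪ {e, f} := by
    ext x
    simp only [mem_diff, mem_union, mem_insert_iff, mem_singleton_iff]
    constructor
    · rintro ⟨hxE, hxA⟩
      by_cases hxe : x = e
      · exact Or.inr (Or.inl hxe)
      by_cases hxf : x = f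
      · exact Or.inr (Or.inr hxf)
      rcases hmem x hxE hxe hxf with h | h
      · exact absurd h hxA
      · exact Or.inl h
    · rintro (hx | rfl | rfl)
      · exact ⟨(hB x hx).1, fun hxA => hdisj' x hxA hx⟩
      · exact ⟨heE, fun hxA => (hA x hxA).2.1 rfl⟩
      · exact ⟨hfE, fun hxA => (hA x hxA).2.2 rfl⟩
  have S3 : (B ∪ {e}) ∪ {f} = B ∪ {e, f} := by
    ext x
    simp only [mem_union, mem_insert_iff, mem_singleton_iff]
    tauto
  have S6 : N.E ∪ {f} = M.E \ {e} := by
    rw [hNE, diff_union_self, union_eq_self_of_subset_right]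
    simp only [singleton_subset_iff, mem_diff, mem_singleton_iff]
    exact ⟨hfE, Ne.symm hef⟩
  -- subset facts
  have hAe : A ⊆ M.E \ {e} := fun x hx => ⟨(hA x hx).1, by simpa using (hA x hx).2.1⟩
  have hAf : A ⊆ M.E \ {f} := fun x hx => ⟨(hA x hx).1, by simpa using (hA x hx).2.2⟩
  have hBfE : B ∪ {f} ⊆ M.E \ {e} := by
    rintro x (hx | hx)
    · exact ⟨(hB x hx).1, by simpa using (hB x hx).2.1⟩
    · simp only [mem_singleton_iff] at hx
      subst hx
      exact ⟨hfE, by simpa using Ne.symm hef⟩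
  have hBeE : B ∪ {e} ⊆ M.E \ {f} := by
    rintro x (hx | hx)
    · exact ⟨(hB x hx).1, by simpa using (hB x hx).2.2⟩
    · simp only [mem_singleton_iff] at hx
      subst hx
      exact ⟨heE, by simpa using hef⟩
  have hfMe : ({f} : Set α) ⊆ M.E \ {e} := by
    simp only [singleton_subset_iff, mem_diff, mem_singleton_iff]
    exact ⟨hfE, Ne.symm hef⟩
  -- simplicity facts
  have hIf : M.Indep {f} := indep_singleton_of_simple hMsimple hfE
  have hIestar : M✶.Indep {e} := indep_singleton_of_simple hMcosimple heE
  have hIfstar : M✶.Indep {f} := indep_singleton_of_simple hMcosimple hfE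
  have hrEe : rk M (M.E \ {e}) = rk M M.E := rk_ground_diff_singleton hIestar
  -- rank of {f} in M and in M \ e
  have hrf : rk M {f} = 1 := rk_singleton hIf
  have hrf' : rk (delete M {e}) {f} = 1 := by
    rw [rk_delete M {e} {f} hfMe]; exact hrf
  -- analysis of h2 : lam (M \ e) A
  have hMe_ground : (delete M {e}).E = M.E \ {e} := rfl
  unfold lam at h1 h2 hlamN ⊢
  rw [hMe_ground, S1, rk_delete M {e} A hAe, rk_delete M {e} _ hBfE,
    rk_delete M {e} _ subset_rfl, hrEe] at h2
  -- analysis of h1 : lam (M / f) A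
  have hMf_ground : (contract M {f}).E = M.E \ {f} := rfl
  have hfsub : ({f} : Set α) ⊆ M.E := singleton_subset_iff.2 hfE
  have c1 : rk (contract M {f}) A + rk M {f} = rk M (A ∪ {f}) :=
    rk_contract_add M hfsub hAf
  have c2 : rk (contract M {f}) (B ∪ {e}) + rk M {f} = rk M (B ∪ {e, f}) := by
    rw [rk_contract_add M hfsub hBeE, S3]
  have c3 : rk (contract M {f}) (M.E \ {f}) + rk M {f} = rk M M.E := by
    rw [rk_contract_add M hfsub subset_rfl, diff_union_of_subset hfsub]
  rw [hMf_ground, S2] at h1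
  -- analysis of hlamN : lam N A
  have hNeq : N = contract (delete M {e}) {f} := hN.symm
  have hfsub' : ({f} : Set α) ⊆ (delete M {e}).E := hfMe
  have hANE : A ⊆ (M.E \ {e}) \ {f} := fun x hx =>
    ⟨hAe hx, by simpa using (hA x hx).2.2⟩
  have hBNE : B ⊆ (M.E \ {e}) \ {f} := fun x hx =>
    ⟨⟨(hB x hx).1, by simpa using (hB x hx).2.1⟩, by simpa using (hB x hx).2.2⟩
  have n1 : rk N A + 1 = rk M (A ∪ {f}) := by
    rw [hNeq, ← hrf']
    rw [rk_contract_add (delete M {e}) hfsub' hANE,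
      rk_delete M {e} _ (union_subset hAe hfMe)]
  have n2 : rk N B + 1 = rk M (B ∪ {f}) := by
    rw [hNeq, ← hrf']
    rw [rk_contract_add (delete M {e}) hfsub' hBNE, rk_delete M {e} _ hBfE]
  have n3 : rk N N.E + 1 = rk M M.E := by
    have hNEsub : N.E ⊆ (delete M {e}).E \ {f} := by
      rw [hNE]; exact fun x hx => hx
    have h := rk_contract_add (delete M {e}) hfsub' hNEsub
    rw [← hNeq, S6, rk_delete M {e} _ subset_rfl, hrf', hrEe] at h
    exact h
  rw [S5] at hlamN
  have c1' : rk (contract M {f}) A + 1 = rk M (A ∪ {f}) := by rw [← hrf]; exact c1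
  have c2' : rk (contract M {f}) (B ∪ {e}) + 1 = rk M (B ∪ {e, f}) := by
    rw [← hrf]; exact c2
  have c3' : rk (contract M {f}) (M.E \ {f}) + 1 = rk M M.E := by rw [← hrf]; exact c3
  rw [S7]
  omega


end SeymourDecomp
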